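/- Let A be a bounded operator on a Banach space (or elements of a Banach algebra), and let B be another element. Then for every scalar λ, ∑_{k=1}^∞ (λ^k/k!) ∑_{j=0}^{k-1} A^j B A^{k-1-j} = e^{λA} · ((1 - e^{-λ ad_A})/ad_A)(B), where ad_A(B) = AB - BA and (1 - e^{-λ ad_A})/ad_A denotes the entire function ∑_{n=0}^∞ (-1)^n λ^{n+1} ad_A^n /(n+1)! applied to B. -/

import Mathlib

open Finset

lemma orth (m i : ℕ) (h : i < m) :
    ∑ n ∈ Finset.Icc i m, (-1:ℂ)^n * (n.choose i) * (m.choose n) = 0 := by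
  rw [← Finset.Ico_add_one_right_eq_Icc, Finset.sum_Ico_eq_sum_range]
  have hmi : m + 1 - i = (m - i) + 1 := by omega
  rw [hmi]
  have hterm : ∀ t ∈ Finset.range (m - i + 1),
      (-1:ℂ)^(i+t) * ((i+t).choose i) * (m.choose (i+t))
        = ((-1:ℂ)^i * (m.choose i)) * ((-1:ℂ)^t * ((m-i).choose t)) := by
    intro t ht
    have h1 : i + t ≤ m := by
      simp only [Finset.mem_range] at ht; omega
    have hc : ((m.choose (i+t) : ℂ)) * ((i+t).choose i)
        = (m.choose i) * ((m-i).choose t) := by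
      have := Nat.choose_mul (n := m) (Nat.le_add_right i t)
      rw [Nat.add_sub_cancel_left] at this
      exact_mod_cast congrArg (Nat.cast : ℕ → ℂ) this
    rw [pow_add]
    linear_combination ((-1:ℂ)^i * (-1)^t) * hc
  rw [Finset.sum_congr rfl hterm, ← Finset.mul_sum]
  have halt : ∑ t ∈ Finset.range (m - i + 1), (-1:ℂ)^t * ((m-i).choose t) = 0 := by
    have := Int.alternating_sum_range_choose_of_ne (n := m - i) (by omega)
    exact_mod_cast congrArg (Int.cast : ℤ → ℂ) this
  rw [halt, mul_zero]

lemma key (i k : ℕ) (h : i ≤ k) :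
    ∑ n ∈ Finset.Icc i k, (-1:ℂ)^(n+i) * (n.choose i) * ((k+1).choose (n+1)) = 1 := by
  induction k, h using Nat.le_induction with
  | base =>
      simp [Finset.Icc_self, ← pow_add, pow_mul]
  | succ k hik ih =>
      have hsplit : ∀ n ∈ Finset.Icc i (k+1),
          (-1:ℂ)^(n+i) * (n.choose i) * ((k+2).choose (n+1))
            = (-1:ℂ)^(n+i) * (n.choose i) * ((k+1).choose n)
              + (-1:ℂ)^(n+i) * (n.choose i) * ((k+1).choose (n+1)) := by
        intro n _
        rw [Nat.choose_succ_succ' (k+1) n]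
        push_cast
        ring
      rw [Finset.sum_congr rfl hsplit, Finset.sum_add_distrib]
      have hS1 : ∑ n ∈ Finset.Icc i (k+1), (-1:ℂ)^(n+i) * (n.choose i) * ((k+1).choose n) = 0 := by
        have := orth (k+1) i (by omega)
        calc ∑ n ∈ Finset.Icc i (k+1), (-1:ℂ)^(n+i) * (n.choose i) * ((k+1).choose n)
            = (-1:ℂ)^i * ∑ n ∈ Finset.Icc i (k+1), (-1:ℂ)^n * (n.choose i) * ((k+1).choose n) := by
              rw [Finset.mul_sum]; exact Finset.sum_congr rfl fun n _ => by rw [pow_add]; ring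
          _ = 0 := by rw [this, mul_zero]
      have hS2 : ∑ n ∈ Finset.Icc i (k+1), (-1:ℂ)^(n+i) * (n.choose i) * ((k+1).choose (n+1)) = 1 := by
        rw [Finset.sum_Icc_succ_top (by omega)]
        rw [Nat.choose_succ_self (k+1)]
        simpa using ih
      rw [hS1, hS2, zero_add]

lemma ad_pow {𝒜 : Type*} [Ring 𝒜] [Algebra ℂ 𝒜] (A : 𝒜) (n : ℕ) : ∀ B : 𝒜,
    (fun X : 𝒜 => A * X - X * A)^[n] B
      = ∑ i ∈ Finset.range (n+1), ((-1:ℂ)^i * (n.choose i)) • (A^(n-i) * B * A^i) := by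
  induction n with
  | zero => intro B; simp
  | succ n ih =>
      intro B
      rw [Function.iterate_succ_apply, ih (A * B - B * A)]
      have expand : ∀ i ∈ Finset.range (n+1),
          ((-1:ℂ)^i * (n.choose i)) • (A^(n-i) * (A * B - B * A) * A^i)
            = ((-1:ℂ)^i * (n.choose i)) • (A^(n+1-i) * B * A^i)
              - ((-1:ℂ)^i * (n.choose i)) • (A^(n-i) * B * A^(i+1)) := by
        intro i hi
        simp only [Finset.mem_range] at hi
        have h1 : A^(n-i) * (A * B - B * A) * A^i
            = A^(n+1-i) * B * A^i - A^(n-i) * B * A^(i+1) := by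
          have hp : A^(n-i) * A = A^(n+1-i) := by
            rw [← pow_succ]; congr 1; omega
          rw [mul_sub, sub_mul, ← mul_assoc, hp, pow_succ]
          simp [mul_assoc, ← pow_succ, ← pow_succ']
        rw [h1, smul_sub]
      rw [Finset.sum_congr rfl expand, Finset.sum_sub_distrib]
      set s1 : ℕ → 𝒜 := fun i => ((-1:ℂ)^i * (n.choose i)) • (A^(n+1-i) * B * A^i) with hs1
      set s2 : ℕ → 𝒜 := fun i => ((-1:ℂ)^i * (n.choose i)) • (A^(n-i) * B * A^(i+1)) with hs2
      set h : ℕ → 𝒜 := fun i => ((-1:ℂ)^(i+1) * (n.choose (i+1))) • (A^(n-i) * B * A^(i+1)) with hh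
      set g : ℕ → 𝒜 := fun i => ((-1:ℂ)^i * ((n+1).choose i)) • (A^(n+1-i) * B * A^i) with hg
      have hG : ∑ i ∈ Finset.range (n+2), g i
          = ∑ i ∈ Finset.range (n+1), (-(s2 i) + h i) + g 0 := by
        rw [Finset.sum_range_succ']
        congr 1
        refine Finset.sum_congr rfl fun i hi => ?_
        simp only [hg, hs2, hh, Nat.choose_succ_succ' n i, Nat.succ_sub_succ]
        push_cast
        module
      have hS1 : ∑ i ∈ Finset.range (n+1), s1 i = ∑ i ∈ Finset.range n, h i + g 0 := by
        rw [Finset.sum_range_succ']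
        congr 1
        · refine Finset.sum_congr rfl fun i hi => ?_
          simp only [hs1, hh, Nat.succ_sub_succ]
        · simp [hs1, hg]
      have hH : ∑ i ∈ Finset.range (n+1), h i = ∑ i ∈ Finset.range n, h i := by
        rw [Finset.sum_range_succ]
        simp [hh, Nat.choose_succ_self]
      rw [hG, Finset.sum_add_distrib, Finset.sum_neg_distrib, hH]
      rw [hS1]
      abel

lemma ad_norm_le {𝒜 : Type*} [NormedRing 𝒜] (A B : 𝒜) (n : ℕ) :
    ‖(fun X : 𝒜 => A * X - X * A)^[n] B‖ ≤ (2 * ‖A‖)^n * ‖B‖ := by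
  induction n with
  | zero => simp
  | succ n ih =>
      rw [Function.iterate_succ_apply']
      set Y := (fun X : 𝒜 => A * X - X * A)^[n] B with hY
      calc ‖A * Y - Y * A‖ ≤ ‖A * Y‖ + ‖Y * A‖ := norm_sub_le _ _
        _ ≤ ‖A‖ * ‖Y‖ + ‖Y‖ * ‖A‖ := add_le_add (norm_mul_le _ _) (norm_mul_le _ _)
        _ = (2 * ‖A‖) * ‖Y‖ := by ring
        _ ≤ (2 * ‖A‖) * ((2 * ‖A‖)^n * ‖B‖) := by
            apply mul_le_mul_of_nonneg_left ih (by positivity)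
        _ = (2 * ‖A‖)^(n+1) * ‖B‖ := by ring

/-- in a unital complex Banach algebra, for all λ,
∑_{k=1}^∞ (λ^k/k!) ∑_{j=0}^{k-1} A^j B A^{k-1-j}
  = e^{λA} · ((1 - e^{-λ ad_A})/ad_A)(B). -/
theorem stmt_3 {𝒜 : Type*} [NormedRing 𝒜] [NormedAlgebra ℂ 𝒜] [CompleteSpace 𝒜]
    (A B : 𝒜) (lam : ℂ) :
    (∑' k : ℕ, (lam ^ (k + 1) / (Nat.factorial (k + 1) : ℂ)) •
        ∑ j ∈ Finset.range (k + 1), A ^ j * B * A ^ (k - j))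
      = NormedSpace.exp (lam • A) *
        ∑' n : ℕ, ((-1 : ℂ) ^ n * lam ^ (n + 1) / (Nat.factorial (n + 1) : ℂ)) •
          ((fun X : 𝒜 => A * X - X * A)^[n] B) := by
  set F : ℕ → 𝒜 := fun m => (lam ^ m / (Nat.factorial m : ℂ)) • A ^ m with hF
  set G : ℕ → 𝒜 := fun n => ((-1 : ℂ) ^ n * lam ^ (n + 1) / (Nat.factorial (n + 1) : ℂ)) •
      ((fun X : 𝒜 => A * X - X * A)^[n] B) with hG
  have hFeq : ∀ m : ℕ, ((Nat.factorial m : ℂ))⁻¹ • (lam • A) ^ m = F m := by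
    intro m
    rw [smul_pow, smul_smul, hF]
    congr 1
    field_simp
  have hexp : NormedSpace.exp (lam • A) = ∑' m, F m := by
    rw [NormedSpace.exp_eq_tsum ℂ]
    exact tsum_congr hFeq
  have hFnorm : Summable fun m => ‖F m‖ := by
    have := NormedSpace.norm_expSeries_summable' (𝕂 := ℂ) (lam • A)
    refine this.congr fun m => ?_
    rw [hFeq]
  have hGnorm : Summable fun n => ‖G n‖ := by
    have hb : Summable fun n : ℕ =>
        (‖lam‖ * ‖B‖) * ((2 * ‖lam‖ * ‖A‖) ^ n / (Nat.factorial n : ℝ)) :=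
      (Real.summable_pow_div_factorial _).mul_left _
    refine Summable.of_nonneg_of_le (fun n => norm_nonneg _) (fun n => ?_) hb
    have hcoef : ‖((-1 : ℂ) ^ n * lam ^ (n + 1) / (Nat.factorial (n + 1) : ℂ))‖
        = ‖lam‖ ^ (n + 1) / (Nat.factorial (n + 1) : ℝ) := by
      simp [norm_div, norm_mul, norm_pow, Complex.norm_natCast]
    rw [hG, norm_smul, hcoef]
    have h1 : ‖(fun X : 𝒜 => A * X - X * A)^[n] B‖ ≤ (2 * ‖A‖)^n * ‖B‖ := ad_norm_le A B n
    have hfac : ((Nat.factorial n : ℝ)) ≤ ((Nat.factorial (n+1) : ℝ)) := by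
      exact_mod_cast Nat.factorial_le (Nat.le_succ n)
    have hfacpos : (0:ℝ) < (Nat.factorial n : ℝ) := by positivity
    have hfacpos' : (0:ℝ) < (Nat.factorial (n+1) : ℝ) := by positivity
    calc ‖lam‖ ^ (n + 1) / (Nat.factorial (n + 1) : ℝ) * ‖(fun X : 𝒜 => A * X - X * A)^[n] B‖
        ≤ ‖lam‖ ^ (n + 1) / (Nat.factorial n : ℝ) * ((2 * ‖A‖)^n * ‖B‖) := by
          apply mul_le_mul _ h1 (norm_nonneg _) (by positivity)
          apply div_le_div_of_nonneg_left _ hfacpos _ <;> first | positivity | exact hfac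
      _ = (‖lam‖ * ‖B‖) * ((2 * ‖lam‖ * ‖A‖) ^ n / (Nat.factorial n : ℝ)) := by
          rw [pow_succ]
          field_simp
          ring
  rw [hexp, tsum_mul_tsum_eq_tsum_sum_antidiagonal_of_summable_norm hFnorm hGnorm]
  refine tsum_congr fun k => ?_
  rw [Finset.Nat.sum_antidiagonal_eq_sum_range_succ_mk]
  -- reflect so the second index is the running one
  rw [← Finset.sum_range_reflect (fun m => F m * G (k - m)) (k+1)]
  have hrefl : ∀ n ∈ Finset.range (k+1),
      F (k + 1 - 1 - n) * G (k - (k + 1 - 1 - n)) = F (k - n) * G n := by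
    intro n hn
    simp only [Finset.mem_range] at hn
    congr 2 <;> omega
  rw [Finset.sum_congr rfl hrefl]
  -- expand each term into a double sum
  have hterm : ∀ n ∈ Finset.range (k+1), F (k - n) * G n
      = ∑ i ∈ Finset.range (n+1),
          (((-1:ℂ)^(n+i) * (n.choose i) * ((k+1).choose (n+1))) * (lam^(k+1) / ((Nat.factorial (k+1) : ℂ)))) •
            (A^(k-i) * B * A^i) := by
    intro n hn
    simp only [Finset.mem_range] at hn
    simp only [hF, hG]
    beta_reduce
    rw [ad_pow, Finset.smul_sum, Finset.mul_sum]
    refine Finset.sum_congr rfl fun i hi => ?_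
    simp only [Finset.mem_range] at hi
    rw [smul_mul_smul_comm, mul_smul_comm, smul_smul]
    have hA : A ^ (k - n) * (A ^ (n - i) * B * A ^ i) = A^(k-i) * B * A^i := by
      rw [← mul_assoc, ← mul_assoc, ← pow_add]
      congr 3
      omega
    rw [hA]
    congr 1
    have hlam : lam ^ (k - n) * lam ^ (n+1) = lam ^ (k+1) := by
      rw [← pow_add]; congr 1; omega
    have hchoose : (((k+1).choose (n+1) : ℂ)) =
        (Nat.factorial (k+1) : ℂ) / ((Nat.factorial (n+1) : ℂ) * (Nat.factorial (k - n) : ℂ)) := by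
      have := Nat.cast_choose ℂ (show n+1 ≤ k+1 by omega)
      rwa [show k + 1 - (n+1) = k - n by omega] at this
    have h1 : (Nat.factorial (k-n) : ℂ) ≠ 0 := Nat.cast_ne_zero.mpr (Nat.factorial_ne_zero _)
    have h2 : (Nat.factorial (n+1) : ℂ) ≠ 0 := Nat.cast_ne_zero.mpr (Nat.factorial_ne_zero _)
    have h3 : (Nat.factorial (k+1) : ℂ) ≠ 0 := Nat.cast_ne_zero.mpr (Nat.factorial_ne_zero _)
    rw [hchoose, ← hlam]
    field_simp
    ring
  rw [Finset.sum_congr rfl hterm]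
  -- swap the double sum
  rw [Finset.sum_comm' (s' := fun i => Finset.Icc i k) (t' := Finset.range (k+1))
    (by intro n i; simp only [Finset.mem_range, Finset.mem_Icc]; omega)]
  have hinner : ∀ i ∈ Finset.range (k+1),
      ∑ n ∈ Finset.Icc i k,
        (((-1:ℂ)^(n+i) * (n.choose i) * ((k+1).choose (n+1))) * (lam^(k+1) / ((Nat.factorial (k+1) : ℂ)))) •
          (A^(k-i) * B * A^i)
        = (lam^(k+1) / ((Nat.factorial (k+1) : ℂ))) • (A^(k-i) * B * A^i) := by
    intro i hi
    simp only [Finset.mem_range] at hi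
    rw [← Finset.sum_smul, ← Finset.sum_mul, key i k (by omega), one_mul]
  rw [Finset.sum_congr rfl hinner, ← Finset.smul_sum]
  congr 1
  rw [← Finset.sum_range_reflect (fun j => A^j * B * A^(k-j)) (k+1)]
  refine Finset.sum_congr rfl fun i hi => ?_
  simp only [Finset.mem_range] at hi
  congr 2 <;> omega
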